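/- Let $A$ be a C*-algebra, let $G$ be a finite group, and suppose $\alpha: G \to \mathrm{Aut}(A)$ arises as a direct limit of a direct system of $G$-C*-algebras $(A_j, \alpha^{(j)})$ in which each action $\alpha^{(j)}$ is inner (i.e., for every finite subset of $A_j$ there is a group homomorphism $g \mapsto z_g$ into the unitary group of $A_j$ implementing $\alpha^{(j)}$ exactly by conjugation). Then $\alpha$ is strictly approximately inner: for every finite set $F \subset A$ and every $\varepsilon > 0$, there is a group homomorphism $g \mapsto w_g$ from $G$ to the unitary group of $A$ such that $\|\alpha_g(a) - w_g a w_g^*\| < \varepsilon$ for all $g \in G$ and $a \in F$. -/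

import Mathlib

/-- Strict approximate innerness of an action of a finite group on a unital C*-algebra:
for every finite set and tolerance there is a group homomorphism into the unitary group
approximately implementing the action. -/
def StrictlyApproxInner {G : Type*} [Group G] {A : Type*} [CStarAlgebra A]
    (α : G → A → A) : Prop :=
  ∀ (F : Finset A) (ε : ℝ), 0 < ε → ∃ z : G →* unitary A,
    ∀ g : G, ∀ a ∈ F, ‖α g a - (z g : A) * a * star ((z g : A))‖ < ε

/-- Let `A` be a C*-algebra carrying an action `α` of a finite group `G`
which arises as the direct limit of a directed system of `G`-C*-algebras `(A_j, α_j)` (with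
equivariant connecting maps `φ` and equivariant limit maps `ψ_j` whose ranges have dense
union), in which each `α_j` is inner: for every finite subset of `A_j` there is a group
homomorphism into the unitary group implementing `α_j` exactly by conjugation.
Then `α` is strictly approximately inner. -/
theorem strictlyApproxInner_of_directLimit_inner
    {G : Type*} [Group G] [Fintype G]
    {J : Type*} [Preorder J] [IsDirected J (· ≤ ·)] [Nonempty J]
    (Afam : J → Type*) [∀ j, CStarAlgebra (Afam j)]
    {A : Type*} [CStarAlgebra A]
    (αfam : ∀ j, G → (Afam j ≃⋆ₐ[ℂ] Afam j))
    (hαfam : ∀ (j : J) (g h : G) (a : Afam j), αfam j (g * h) a = αfam j g (αfam j h a))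
    (α : G → (A ≃⋆ₐ[ℂ] A))
    (hα : ∀ (g h : G) (a : A), α (g * h) a = α g (α h a))
    (φ : ∀ i j : J, i ≤ j → (Afam i →⋆ₐ[ℂ] Afam j))
    (hφcomp : ∀ (i j k : J) (hij : i ≤ j) (hjk : j ≤ k) (a : Afam i),
      φ j k hjk (φ i j hij a) = φ i k (hij.trans hjk) a)
    (hφequiv : ∀ (i j : J) (hij : i ≤ j) (g : G) (a : Afam i),
      φ i j hij (αfam i g a) = αfam j g (φ i j hij a))
    (ψ : ∀ j : J, Afam j →⋆ₐ[ℂ] A)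
    (hψcomp : ∀ (i j : J) (hij : i ≤ j) (a : Afam i), ψ j (φ i j hij a) = ψ i a)
    (hψequiv : ∀ (j : J) (g : G) (a : Afam j), ψ j (αfam j g a) = α g (ψ j a))
    (hdense : Dense (⋃ j : J, Set.range (ψ j)))
    (hinner : ∀ (j : J) (F : Finset (Afam j)), ∃ z : G →* unitary (Afam j),
      ∀ g : G, ∀ a ∈ F, αfam j g a = (z g : Afam j) * a * star ((z g : Afam j))) :
    StrictlyApproxInner (fun g a => α g a) := by
  classical
  intro F ε hε
  have hε3 : 0 < ε / 3 := by positivity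
  have key : ∀ a : A, ∃ (j : J) (b : Afam j), ‖ψ j b - a‖ < ε / 3 := by
    intro a
    have := Metric.mem_closure_iff.mp (hdense a) (ε / 3) hε3
    obtain ⟨x, hx, hdist⟩ := this
    obtain ⟨_, ⟨j, rfl⟩, b, rfl⟩ := hx
    exact ⟨j, b, by simpa [dist_eq_norm, norm_sub_rev] using hdist⟩
  choose jf bf hb using key
  obtain ⟨j0, hj0⟩ := Finset.exists_le (F.image jf)
  have hj0' : ∀ a ∈ F, jf a ≤ j0 := fun a ha => hj0 _ (Finset.mem_image_of_mem _ ha)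
  set F' : Finset (Afam j0) :=
    F.attach.image (fun a => φ (jf a.1) j0 (hj0' a.1 a.2) (bf a.1)) with hF'
  obtain ⟨z, hz⟩ := hinner j0 F'
  refine ⟨(Unitary.map (StarMonoidHom.ofClass (ψ j0))).toMonoidHom.comp z, ?_⟩
  intro g a ha
  set b : Afam j0 := φ (jf a) j0 (hj0' a ha) (bf a) with hbdef
  have hbF' : b ∈ F' := Finset.mem_image.mpr ⟨⟨a, ha⟩, Finset.mem_attach _ _, rfl⟩
  have hψb : ψ j0 b = ψ (jf a) (bf a) := hψcomp _ _ _ _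
  have hclose : ‖ψ j0 b - a‖ < ε / 3 := hψb ▸ hb a
  set u : A := ((Unitary.map (StarMonoidHom.ofClass (ψ j0))) (z g) : A) with hu
  have huval : u = ψ j0 ((z g : Afam j0)) := rfl
  have hmid : α g (ψ j0 b) = u * ψ j0 b * star u := by
    rw [huval, ← hψequiv, hz g b hbF', map_mul, map_mul, map_star]
  have h1 : ‖α g a - α g (ψ j0 b)‖ < ε / 3 := by
    have hsub : α g a - α g (ψ j0 b) = α g (a - ψ j0 b) := (map_sub (α g) _ _).symm
    rw [hsub, StarAlgEquiv.norm_map (α g), norm_sub_rev]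
    exact hclose
  have h2 : ‖u * ψ j0 b * star u - u * a * star u‖ < ε / 3 := by
    have : u * ψ j0 b * star u - u * a * star u = (u : A) * (ψ j0 b - a) * star u := by rw [mul_sub, sub_mul]
    rw [this]
    have h2a : ‖(u : A) * (ψ j0 b - a) * star u‖ = ‖ψ j0 b - a‖ := by
      rw [CStarRing.norm_mul_mem_unitary _ (Unitary.star_mem ((Unitary.map (StarMonoidHom.ofClass (ψ j0))) (z g)).2),
        CStarRing.norm_coe_unitary_mul]
    rw [h2a]; exact hclose
  have hfinal : ‖α g a - u * a * star u‖ < ε := by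
    calc ‖α g a - u * a * star u‖
        = ‖(α g a - α g (ψ j0 b)) + (u * ψ j0 b * star u - u * a * star u)‖ := by
          rw [hmid, sub_add_sub_cancel]
      _ ≤ ‖α g a - α g (ψ j0 b)‖ + ‖u * ψ j0 b * star u - u * a * star u‖ := norm_add_le _ _
      _ < ε / 3 + ε / 3 := add_lt_add h1 h2
      _ < ε := by linarith
  simpa [huval] using hfinal
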